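/- Fix a ∈ (1,2). There exist constants 0 < c ≤ C such that for all λ ∈ (0,1), c·λ^{a-1} ≤ Σ_{j=1}^∞ (jλ/(jλ+1)) j^{-a} ≤ C·λ^{a-1}. -/

import Mathlib

open Real Finset

private lemma lemA {p : ℝ} (hp0 : 0 < p) (hp1 : p ≤ 1) (j : ℕ) :
    p * ((j : ℝ) + 1) ^ (p - 1) ≤ ((j : ℝ) + 1) ^ p - (j : ℝ) ^ p := by
  set y : ℝ := (j : ℝ) with hy
  have hy0 : 0 ≤ y := Nat.cast_nonneg j
  have hx0 : (0 : ℝ) < y + 1 := by linarith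
  have hs : -1 ≤ -(1 / (y + 1)) := by
    rw [neg_le_neg_iff, div_le_one hx0]; linarith
  have hb : (1 + -(1 / (y + 1))) ^ p ≤ 1 + p * -(1 / (y + 1)) :=
    rpow_one_add_le_one_add_mul_self hs hp0.le hp1
  have h1 : y ^ p ≤ (y + 1) ^ p * (1 - p / (y + 1)) := by
    have h2 : y ^ p = (y + 1) ^ p * (y / (y + 1)) ^ p := by
      rw [← Real.mul_rpow hx0.le (by positivity)]
      congr 1
      field_simp
    rw [h2]
    apply mul_le_mul_of_nonneg_left _ (Real.rpow_nonneg hx0.le p)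
    have he : y / (y + 1) = 1 + -(1 / (y + 1)) := by field_simp; ring
    calc (y / (y + 1)) ^ p = (1 + -(1 / (y + 1))) ^ p := by rw [he]
      _ ≤ 1 + p * -(1 / (y + 1)) := hb
      _ = 1 - p / (y + 1) := by ring
  have h3 : (y + 1) ^ p * (p / (y + 1)) = p * (y + 1) ^ (p - 1) := by
    rw [show p - 1 = p + (-1) by ring, Real.rpow_add hx0, Real.rpow_neg_one]
    ring
  have h4 : (y + 1) ^ p * (1 - p / (y + 1)) = (y + 1) ^ p - p * (y + 1) ^ (p - 1) := by
    rw [← h3]; ring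
  linarith [h1, h4]

private lemma lemB {q : ℝ} (hq0 : 0 < q) (hq1 : q ≤ 1) (k : ℕ) (hk : 1 ≤ k) :
    q * ((k : ℝ) + 1) ^ (-q - 1) ≤ (k : ℝ) ^ (-q) - ((k : ℝ) + 1) ^ (-q) := by
  set x : ℝ := (k : ℝ) + 1 with hx
  have hk1 : (1 : ℝ) ≤ (k : ℝ) := by exact_mod_cast hk
  have hx2 : (2 : ℝ) ≤ x := by rw [hx]; linarith
  have hx0 : (0 : ℝ) < x := by linarith
  have hkpos : (0 : ℝ) < (k : ℝ) := by linarith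
  have hs : -1 ≤ -(1 / x) := by
    rw [neg_le_neg_iff, div_le_one hx0]; linarith
  have hb : (1 + -(1 / x)) ^ q ≤ 1 + q * -(1 / x) :=
    rpow_one_add_le_one_add_mul_self hs hq0.le hq1
  have h1 : (k : ℝ) ^ q ≤ x ^ q * (1 - q / x) := by
    have h2 : (k : ℝ) ^ q = x ^ q * ((k : ℝ) / x) ^ q := by
      rw [← Real.mul_rpow hx0.le (by positivity)]
      congr 1
      field_simp
    rw [h2]
    apply mul_le_mul_of_nonneg_left _ (Real.rpow_nonneg hx0.le q)
    have he : (k : ℝ) / x = 1 + -(1 / x) := by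
      rw [hx]; field_simp; ring
    calc ((k : ℝ) / x) ^ q = (1 + -(1 / x)) ^ q := by rw [he]
      _ ≤ 1 + q * -(1 / x) := hb
      _ = 1 - q / x := by ring
  have hxq : (0 : ℝ) < x ^ q := Real.rpow_pos_of_pos hx0 q
  have hkq : (0 : ℝ) < (k : ℝ) ^ q := Real.rpow_pos_of_pos hkpos q
  have h2 : x ^ (-q) * (1 + q / x) ≤ (k : ℝ) ^ (-q) := by
    have step : (1 + q / x) * (k : ℝ) ^ q ≤ 1 * x ^ q := by
      have hqx : (0 : ℝ) ≤ 1 + q / x := by positivity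
      calc (1 + q / x) * (k : ℝ) ^ q ≤ (1 + q / x) * (x ^ q * (1 - q / x)) :=
            mul_le_mul_of_nonneg_left h1 hqx
        _ = x ^ q * (1 - (q / x) ^ 2) := by ring
        _ ≤ 1 * x ^ q := by nlinarith [sq_nonneg (q / x), hxq.le]
    rw [Real.rpow_neg hx0.le, Real.rpow_neg (Nat.cast_nonneg k)]
    have e1 : (x ^ q)⁻¹ * (1 + q / x) = (1 + q / x) / (x ^ q) := by ring
    have e2 : ((k : ℝ) ^ q)⁻¹ = 1 / ((k : ℝ) ^ q) := by ring
    rw [e1, e2]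
    exact (div_le_div_iff₀ hxq hkq).2 step
  have h3 : x ^ (-q) * (q / x) = q * x ^ (-q - 1) := by
    rw [show -q - 1 = -q + (-1) by ring, Real.rpow_add hx0, Real.rpow_neg_one]
    ring
  have h4 : q * x ^ (-q - 1) = x ^ (-q) * (1 + q / x) - x ^ (-q) := by rw [← h3]; ring
  linarith [h2, h4]

private lemma telA {p : ℝ} (hp0 : 0 < p) (hp1 : p ≤ 1) (N : ℕ) :
    ∑ j ∈ Finset.range N, ((j : ℝ) + 1) ^ (p - 1) ≤ (N : ℝ) ^ p / p := by
  have key : ∀ j ∈ Finset.range N,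
      ((j : ℝ) + 1) ^ (p - 1) ≤ (((j + 1 : ℕ) : ℝ) ^ p - ((j : ℕ) : ℝ) ^ p) / p := by
    intro j _
    rw [le_div_iff₀ hp0]
    push_cast
    have := lemA hp0 hp1 j
    linarith
  calc ∑ j ∈ Finset.range N, ((j : ℝ) + 1) ^ (p - 1)
      ≤ ∑ j ∈ Finset.range N, ((((j + 1 : ℕ) : ℝ)) ^ p - ((j : ℕ) : ℝ) ^ p) / p :=
        Finset.sum_le_sum key
    _ = (∑ j ∈ Finset.range N, ((((j + 1 : ℕ) : ℝ)) ^ p - ((j : ℕ) : ℝ) ^ p)) / p := by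
        rw [Finset.sum_div]
    _ = (((N : ℕ) : ℝ) ^ p - ((0 : ℕ) : ℝ) ^ p) / p := by
        rw [Finset.sum_range_sub (fun i : ℕ => ((i : ℕ) : ℝ) ^ p) N]
    _ = (N : ℝ) ^ p / p := by
        norm_num [Real.zero_rpow hp0.ne']

private lemma telB {q : ℝ} (hq0 : 0 < q) (hq1 : q ≤ 1) (N : ℕ) (hN : 1 ≤ N) (n : ℕ) :
    ∑ j ∈ Finset.range n, (((N + j : ℕ) : ℝ) + 1) ^ (-q - 1) ≤ (N : ℝ) ^ (-q) / q := by
  set g : ℕ → ℝ := fun i => ((N + i : ℕ) : ℝ) ^ (-q) with hg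
  have key : ∀ j ∈ Finset.range n,
      (((N + j : ℕ) : ℝ) + 1) ^ (-q - 1) ≤ (g j - g (j + 1)) / q := by
    intro j _
    rw [le_div_iff₀ hq0]
    have hkj : 1 ≤ N + j := le_add_right hN
    have hlb := lemB hq0 hq1 (N + j) hkj
    have hcast : ((N + (j + 1) : ℕ) : ℝ) = ((N + j : ℕ) : ℝ) + 1 := by push_cast; ring
    simp only [hg, hcast]
    linarith
  calc ∑ j ∈ Finset.range n, (((N + j : ℕ) : ℝ) + 1) ^ (-q - 1)
      ≤ ∑ j ∈ Finset.range n, (g j - g (j + 1)) / q := Finset.sum_le_sum key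
    _ = (∑ j ∈ Finset.range n, (g j - g (j + 1))) / q := by rw [Finset.sum_div]
    _ = (g 0 - g n) / q := by rw [Finset.sum_range_sub' g n]
    _ ≤ g 0 / q := by
        have hgn : 0 ≤ g n := Real.rpow_nonneg (Nat.cast_nonneg _) _
        gcongr
        linarith
    _ = (N : ℝ) ^ (-q) / q := by simp [hg]

/-- For `a ∈ (1,2)`, `Σ_{j≥1} (jλ/(jλ+1)) j^{-a} ≍ λ^{a-1}` uniformly over `λ ∈ (0,1)`. -/
theorem stmt_4 (a : ℝ) (ha1 : 1 < a) (ha2 : a < 2) :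
    ∃ c C : ℝ, 0 < c ∧ c ≤ C ∧
      ∀ lam : ℝ, 0 < lam → lam < 1 →
        c * lam ^ (a - 1) ≤
          (∑' j : ℕ, (((j : ℝ) + 1) * lam / (((j : ℝ) + 1) * lam + 1)) * ((j : ℝ) + 1) ^ (-a)) ∧
        (∑' j : ℕ, (((j : ℝ) + 1) * lam / (((j : ℝ) + 1) * lam + 1)) * ((j : ℝ) + 1) ^ (-a)) ≤
          C * lam ^ (a - 1) := by
  have h2a : (0 : ℝ) < 2 - a := by linarith
  have h1a : (0 : ℝ) < a - 1 := by linarith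
  refine ⟨(2 : ℝ) ^ (a - 3), (2 : ℝ) ^ (a - 3) + (1 / (2 - a) + 2 ^ (a - 1) / (a - 1)),
    by positivity, le_add_of_nonneg_right (by positivity), ?_⟩
  intro lam hl0 hl1
  set f : ℕ → ℝ :=
    fun j => (((j : ℝ) + 1) * lam / (((j : ℝ) + 1) * lam + 1)) * ((j : ℝ) + 1) ^ (-a) with hf
  have ht0 : ∀ j, 0 ≤ f j := by
    intro j
    rw [hf]
    positivity
  have hfle1 : ∀ j, f j ≤ ((j : ℝ) + 1) ^ (-a) := by
    intro j
    rw [hf]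
    have hx : (0 : ℝ) < ((j : ℝ) + 1) * lam := by positivity
    have h1 : ((j : ℝ) + 1) * lam / (((j : ℝ) + 1) * lam + 1) ≤ 1 := by
      rw [div_le_one (by linarith)]; linarith
    calc (((j : ℝ) + 1) * lam / (((j : ℝ) + 1) * lam + 1)) * ((j : ℝ) + 1) ^ (-a)
        ≤ 1 * ((j : ℝ) + 1) ^ (-a) :=
          mul_le_mul_of_nonneg_right h1 (Real.rpow_nonneg (by positivity) _)
      _ = ((j : ℝ) + 1) ^ (-a) := one_mul _
  have hbase : Summable (fun j : ℕ => ((j : ℝ) + 1) ^ (-a)) := by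
    have h0 : Summable (fun n : ℕ => (n : ℝ) ^ (-a)) :=
      Real.summable_nat_rpow.2 (by linarith)
    have := (summable_nat_add_iff (f := fun n : ℕ => (n : ℝ) ^ (-a)) 1).2 h0
    simpa [Nat.cast_add] using this
  have hsum : Summable f := Summable.of_nonneg_of_le ht0 hfle1 hbase
  set N : ℕ := ⌊1 / lam⌋₊ with hNdef
  have hlam1 : 1 < 1 / lam := by rw [lt_div_iff₀ hl0, one_mul]; exact hl1
  have hN1 : 1 ≤ N := Nat.le_floor (by exact_mod_cast hlam1.le)
  have hNR1 : (1 : ℝ) ≤ (N : ℝ) := by exact_mod_cast hN1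
  have hNpos : (0 : ℝ) < (N : ℝ) := by linarith
  have hNle : (N : ℝ) ≤ 1 / lam := Nat.floor_le (by positivity)
  have hNlt : 1 / lam < (N : ℝ) + 1 := Nat.lt_floor_add_one _
  have hNge : 1 / (2 * lam) ≤ (N : ℝ) := by
    have h' : 1 < ((N : ℝ) + 1) * lam := (div_lt_iff₀ hl0).1 hNlt
    have hprod : 0 ≤ ((N : ℝ) - 1) * lam := mul_nonneg (by linarith) hl0.le
    rw [div_le_iff₀ (by positivity)]
    nlinarith [h', hprod]
  have hNlam : (N : ℝ) * lam ≤ 1 := (le_div_iff₀ hl0).1 hNle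
  constructor
  · -- lower bound
    have hlow : ∀ j ∈ Finset.range N, lam / 2 * (N : ℝ) ^ (1 - a) ≤ f j := by
      intro j hj
      have hjN : (j : ℝ) + 1 ≤ (N : ℝ) := by
        have hjn := Finset.mem_range.1 hj
        exact_mod_cast Nat.succ_le_of_lt hjn
      have hj1 : (0 : ℝ) < (j : ℝ) + 1 := by positivity
      have hx0 : (0 : ℝ) < ((j : ℝ) + 1) * lam := by positivity
      have hx1 : ((j : ℝ) + 1) * lam ≤ 1 := by nlinarith [hl0.le]
      have hfrac : ((j : ℝ) + 1) * lam / 2 ≤ ((j : ℝ) + 1) * lam / (((j : ℝ) + 1) * lam + 1) :=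
        div_le_div_of_nonneg_left hx0.le (by linarith) (by linarith)
      have hpow : (N : ℝ) ^ (1 - a) ≤ ((j : ℝ) + 1) ^ (1 - a) :=
        Real.rpow_le_rpow_of_nonpos hj1 hjN (by linarith)
      have he : ((j : ℝ) + 1) * lam / 2 * ((j : ℝ) + 1) ^ (-a)
          = lam / 2 * ((j : ℝ) + 1) ^ (1 - a) := by
        rw [show (1 - a) = 1 + (-a) by ring, Real.rpow_add hj1, Real.rpow_one]
        ring
      calc lam / 2 * (N : ℝ) ^ (1 - a) ≤ lam / 2 * ((j : ℝ) + 1) ^ (1 - a) :=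
            mul_le_mul_of_nonneg_left hpow (by positivity)
        _ = ((j : ℝ) + 1) * lam / 2 * ((j : ℝ) + 1) ^ (-a) := he.symm
        _ ≤ f j := by
            rw [hf]
            exact mul_le_mul_of_nonneg_right hfrac (Real.rpow_nonneg hj1.le _)
    have hsumlow : (N : ℝ) * (lam / 2 * (N : ℝ) ^ (1 - a)) ≤ ∑ j ∈ Finset.range N, f j := by
      calc (N : ℝ) * (lam / 2 * (N : ℝ) ^ (1 - a))
          = ∑ _j ∈ Finset.range N, lam / 2 * (N : ℝ) ^ (1 - a) := by
            rw [Finset.sum_const, Finset.card_range, nsmul_eq_mul]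
        _ ≤ ∑ j ∈ Finset.range N, f j := Finset.sum_le_sum hlow
    have hA : ∑ j ∈ Finset.range N, f j ≤ ∑' j, f j :=
      Summable.sum_le_tsum _ (fun j _ => ht0 j) hsum
    have hNpow : (N : ℝ) * (N : ℝ) ^ (1 - a) = (N : ℝ) ^ (2 - a) := by
      rw [show (2 - a) = 1 + (1 - a) by ring, Real.rpow_add hNpos, Real.rpow_one]
    have hmono : (1 / (2 * lam)) ^ (2 - a) ≤ (N : ℝ) ^ (2 - a) :=
      Real.rpow_le_rpow (by positivity) hNge (by linarith)
    have h2l : (0 : ℝ) < 2 * lam := by positivity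
    have halg : lam / 2 * (1 / (2 * lam)) ^ (2 - a) = 2 ^ (a - 3) * lam ^ (a - 1) := by
      have e1 : (1 / (2 * lam)) ^ (2 - a) = (2 * lam) ^ (a - 2) := by
        rw [one_div, Real.inv_rpow h2l.le, ← Real.rpow_neg h2l.le,
          show -(2 - a) = a - 2 by ring]
      have e2 : (2 * lam) ^ (a - 2) = 2 ^ (a - 2) * lam ^ (a - 2) :=
        Real.mul_rpow (by norm_num) hl0.le
      have e3 : (2 : ℝ) ^ (a - 3) = 2 ^ (a - 2) / 2 := by
        rw [show a - 3 = (a - 2) - 1 by ring, Real.rpow_sub two_pos, Real.rpow_one]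
      have e4 : lam * lam ^ (a - 2) = lam ^ (a - 1) := by
        rw [show a - 1 = 1 + (a - 2) by ring, Real.rpow_add hl0, Real.rpow_one]
      rw [e1, e2, e3, ← e4]
      ring
    calc (2 : ℝ) ^ (a - 3) * lam ^ (a - 1)
        = lam / 2 * (1 / (2 * lam)) ^ (2 - a) := halg.symm
      _ ≤ lam / 2 * (N : ℝ) ^ (2 - a) := mul_le_mul_of_nonneg_left hmono (by positivity)
      _ = (N : ℝ) * (lam / 2 * (N : ℝ) ^ (1 - a)) := by rw [← hNpow]; ring
      _ ≤ ∑ j ∈ Finset.range N, f j := hsumlow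
      _ ≤ ∑' j, f j := hA
  · -- upper bound
    have hfront : ∑ j ∈ Finset.range N, f j ≤ lam ^ (a - 1) / (2 - a) := by
      have step : ∀ j ∈ Finset.range N, f j ≤ lam * ((j : ℝ) + 1) ^ ((2 - a) - 1) := by
        intro j _
        have hj1 : (0 : ℝ) < (j : ℝ) + 1 := by positivity
        have hx0 : (0 : ℝ) < ((j : ℝ) + 1) * lam := by positivity
        have hd : ((j : ℝ) + 1) * lam / (((j : ℝ) + 1) * lam + 1) ≤ ((j : ℝ) + 1) * lam :=
          div_le_self hx0.le (by linarith)
        calc f j ≤ (((j : ℝ) + 1) * lam) * ((j : ℝ) + 1) ^ (-a) := by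
              rw [hf]
              exact mul_le_mul_of_nonneg_right hd (Real.rpow_nonneg hj1.le _)
          _ = lam * ((j : ℝ) + 1) ^ ((2 - a) - 1) := by
              rw [show (2 - a) - 1 = 1 + (-a) by ring, Real.rpow_add hj1, Real.rpow_one]
              ring
      have hm : (N : ℝ) ^ (2 - a) ≤ (1 / lam) ^ (2 - a) :=
        Real.rpow_le_rpow hNpos.le hNle (by linarith)
      have e1 : (1 / lam) ^ (2 - a) = lam ^ (a - 2) := by
        rw [one_div, Real.inv_rpow hl0.le, ← Real.rpow_neg hl0.le,
          show -(2 - a) = a - 2 by ring]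
      have e2 : lam * lam ^ (a - 2) = lam ^ (a - 1) := by
        rw [show a - 1 = 1 + (a - 2) by ring, Real.rpow_add hl0, Real.rpow_one]
      calc ∑ j ∈ Finset.range N, f j
          ≤ ∑ j ∈ Finset.range N, lam * ((j : ℝ) + 1) ^ ((2 - a) - 1) :=
            Finset.sum_le_sum step
        _ = lam * ∑ j ∈ Finset.range N, ((j : ℝ) + 1) ^ ((2 - a) - 1) := by
            rw [Finset.mul_sum]
        _ ≤ lam * ((N : ℝ) ^ (2 - a) / (2 - a)) :=
            mul_le_mul_of_nonneg_left (telA h2a (by linarith) N) hl0.le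
        _ ≤ lam * ((1 / lam) ^ (2 - a) / (2 - a)) := by
            apply mul_le_mul_of_nonneg_left _ hl0.le
            gcongr
        _ = lam ^ (a - 1) / (2 - a) := by
            rw [e1, ← e2]; ring
    have htail : ∀ m, ∑ j ∈ Finset.range m, f (N + j) ≤ 2 ^ (a - 1) * lam ^ (a - 1) / (a - 1) := by
      intro m
      have step : ∀ j ∈ Finset.range m, f (N + j) ≤ (((N + j : ℕ) : ℝ) + 1) ^ (-(a - 1) - 1) := by
        intro j _
        have h := hfle1 (N + j)
        rwa [show -a = -(a - 1) - 1 by ring] at h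
      have hm : (N : ℝ) ^ (-(a - 1)) ≤ (1 / (2 * lam)) ^ (-(a - 1)) :=
        Real.rpow_le_rpow_of_nonpos (by positivity) hNge (by linarith)
      have e : (1 / (2 * lam)) ^ (-(a - 1)) = 2 ^ (a - 1) * lam ^ (a - 1) := by
        rw [one_div, Real.inv_rpow (by positivity : (0:ℝ) ≤ 2 * lam),
          Real.rpow_neg (by positivity : (0:ℝ) ≤ 2 * lam), inv_inv]
        exact Real.mul_rpow (by norm_num) hl0.le
      calc ∑ j ∈ Finset.range m, f (N + j)
          ≤ ∑ j ∈ Finset.range m, (((N + j : ℕ) : ℝ) + 1) ^ (-(a - 1) - 1) :=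
            Finset.sum_le_sum step
        _ ≤ (N : ℝ) ^ (-(a - 1)) / (a - 1) := telB h1a (by linarith) N hN1 m
        _ ≤ 2 ^ (a - 1) * lam ^ (a - 1) / (a - 1) := by
            rw [← e]
            gcongr
    apply Real.tsum_le_of_sum_range_le ht0
    intro n
    have hpow0 : (0 : ℝ) ≤ lam ^ (a - 1) := Real.rpow_nonneg hl0.le _
    have h23 : (0 : ℝ) ≤ (2 : ℝ) ^ (a - 3) := Real.rpow_nonneg (by norm_num) _
    calc ∑ j ∈ Finset.range n, f j
        ≤ ∑ j ∈ Finset.range (N + n), f j :=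
          Finset.sum_le_sum_of_subset_of_nonneg
            (Finset.range_subset_range.2 (Nat.le_add_left n N)) (fun i _ _ => ht0 i)
      _ = ∑ j ∈ Finset.range N, f j + ∑ j ∈ Finset.range n, f (N + j) :=
          Finset.sum_range_add f N n
      _ ≤ lam ^ (a - 1) / (2 - a) + 2 ^ (a - 1) * lam ^ (a - 1) / (a - 1) :=
          add_le_add hfront (htail n)
      _ = (1 / (2 - a) + 2 ^ (a - 1) / (a - 1)) * lam ^ (a - 1) := by ring
      _ ≤ (2 ^ (a - 3) + (1 / (2 - a) + 2 ^ (a - 1) / (a - 1))) * lam ^ (a - 1) :=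
          mul_le_mul_of_nonneg_right (by linarith) hpow0
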